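/- Let X, Y be Banach spaces, I a tall ideal on ℕ, and A = (A_{n,k}) a matrix of linear operators in L(X,Y) such that for every sequence x ∈ X^ℕ supported on a set of I, the transform Ax is well defined and uniformly bounded (i.e., A maps c₀₀(X,I) into ℓ_∞(Y)). Then there exists k₁ ∈ ℕ such that A_{n,k} = 0 for all n ∈ ℕ and all k ≥ k₁. -/

import Mathlib

open Filter

/-- If `I` is a tall ideal and `A` maps every `X`-valued sequence supported on a set of `I`
to a well-defined bounded `Y`-valued sequence, then all but finitely many columns of `A`
vanish identically. -/
theorem stmt11 {X Y : Type*} [NormedAddCommGroup X] [NormedSpace ℝ X] [CompleteSpace X]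
    [NormedAddCommGroup Y] [NormedSpace ℝ Y] [CompleteSpace Y]
    (I : Set (Set ℕ))
    (hI_sub : ∀ S T : Set ℕ, S ∈ I → T ⊆ S → T ∈ I)
    (hI_union : ∀ S T : Set ℕ, S ∈ I → T ∈ I → S ∪ T ∈ I)
    (hI_fin : ∀ S : Set ℕ, S.Finite → S ∈ I)
    (hI_proper : Set.univ ∉ I)
    (hI_tall : ∀ S : Set ℕ, S.Infinite → ∃ T : Set ℕ, T ⊆ S ∧ T.Infinite ∧ T ∈ I)
    (A : ℕ → ℕ → X →ₗ[ℝ] Y)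
    (hA : ∀ x : ℕ → X, {n | x n ≠ 0} ∈ I → ∃ y : ℕ → Y,
      (∀ n, Tendsto (fun m => ∑ k ∈ Finset.range m, A n k (x k)) atTop (nhds (y n))) ∧
      ∃ r : ℝ, ∀ n, ‖y n‖ ≤ r) :
    ∃ k₁ : ℕ, ∀ n : ℕ, ∀ k, k₁ ≤ k → A n k = 0 := by
  classical
  by_cases hS : {k | ∃ n, A n k ≠ 0}.Finite
  · -- easy case: only finitely many nonzero columns
    obtain ⟨b, hb⟩ := hS.bddAbove
    refine ⟨b + 1, fun n k hk => ?_⟩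
    by_contra h
    have : k ≤ b := hb ⟨n, h⟩
    omega
  · exfalso
    obtain ⟨T, hTsub, hTinf, hTI⟩ := hI_tall _ hS
    -- every row has finite support within T
    have hrowfin : ∀ n : ℕ, {k | k ∈ T ∧ A n k ≠ 0}.Finite := by
      intro n
      by_contra hinf
      have hρ : {k | k ∈ T ∧ A n k ≠ 0}.Infinite := hinf
      have hpick : ∀ k : ℕ, ∃ v : X, (k ∈ T ∧ A n k ≠ 0) → ‖A n k v‖ = 1 := by
        intro k
        by_cases h : k ∈ T ∧ A n k ≠ 0
        · obtain ⟨w, hw⟩ : ∃ w, A n k w ≠ 0 := by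
            by_contra hc
            push_neg at hc
            exact h.2 (LinearMap.ext hc)
          refine ⟨‖A n k w‖⁻¹ • w, fun _ => ?_⟩
          rw [map_smul, norm_smul, norm_inv, norm_norm,
            inv_mul_cancel₀ (norm_ne_zero_iff.mpr hw)]
        · exact ⟨0, fun hh => absurd hh h⟩
      choose u hu using hpick
      set x : ℕ → X := fun k => if k ∈ T ∧ A n k ≠ 0 then u k else 0 with hxdef
      have hsupp : {m | x m ≠ 0} ∈ I := by
        refine hI_sub T _ hTI ?_
        intro m hm
        simp only [hxdef, Set.mem_setOf_eq] at hm
        by_contra hmT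
        have : ¬(m ∈ T ∧ A n m ≠ 0) := fun hc => hmT hc.1
        rw [if_neg this] at hm
        exact hm rfl
      obtain ⟨y, hy, r, hr⟩ := hA x hsupp
      have hterm : Tendsto (fun k => A n k (x k)) atTop (nhds 0) := by
        have h1 := (hy n).comp (tendsto_add_atTop_nat 1)
        have h2 := h1.sub (hy n)
        rw [sub_self] at h2
        simpa only [Function.comp, Finset.sum_range_succ, add_sub_cancel_left] using h2
      have h3 : ∀ᶠ k in atTop, ‖A n k (x k)‖ < 1 :=
        (by simpa using hterm.norm : Tendsto (fun k => ‖A n k (x k)‖) atTop (nhds 0)).eventually_lt_const one_pos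
      obtain ⟨N, hN⟩ := eventually_atTop.mp h3
      obtain ⟨m, hmρ, hmN⟩ := hρ.exists_gt N
      have hm1 : ‖A n m (x m)‖ = 1 := by
        have : x m = u m := if_pos hmρ
        rw [this]
        exact hu m hmρ
      have := hN m (le_of_lt hmN)
      rw [hm1] at this
      exact absurd this (by norm_num)
    -- bound functions for rows
    have hBex : ∀ n : ℕ, ∃ b : ℕ, ∀ k, k ∈ T → A n k ≠ 0 → k ≤ b := by
      intro n
      obtain ⟨b, hb⟩ := (hrowfin n).bddAbove
      exact ⟨b, fun k h1 h2 => hb ⟨h1, h2⟩⟩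
    choose B hB using hBex
    -- the recursive step: given a bound `M` and a partial sequence `χ`, find a new column
    have hstep : ∀ (j M : ℕ) (χ : ℕ → X), ∃ (k n : ℕ) (v : X),
        k ∈ T ∧ M < k ∧ A n k ≠ 0 ∧
        (j : ℝ) + 1 + ‖∑ i ∈ Finset.range k, A n i (χ i)‖ ≤ ‖A n k v‖ := by
      intro j M χ
      obtain ⟨k, hkT, hkM⟩ := hTinf.exists_gt M
      obtain ⟨n, hn⟩ := hTsub hkT
      obtain ⟨w, hw⟩ : ∃ w, A n k w ≠ 0 := by
        by_contra hc
        push_neg at hc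
        exact hn (LinearMap.ext hc)
      set c : ℝ := (j : ℝ) + 1 + ‖∑ i ∈ Finset.range k, A n i (χ i)‖ with hc
      have hcpos : 0 ≤ c := by positivity
      have haw : (0:ℝ) < ‖A n k w‖ := norm_pos_iff.mpr hw
      refine ⟨k, n, (c / ‖A n k w‖) • w, hkT, hkM, hn, ?_⟩
      rw [map_smul, norm_smul, Real.norm_eq_abs, abs_of_nonneg (div_nonneg hcpos haw.le),
        div_mul_cancel₀ _ haw.ne']
    choose K N V hKT hKM hKne hKbig using hstep
    -- the recursion
    set step : ℕ → (ℕ × ℕ × (ℕ → X) × ℕ) → (ℕ × ℕ × (ℕ → X) × ℕ) := fun j p =>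
      (K j p.2.2.2 p.2.2.1, N j p.2.2.2 p.2.2.1,
       Function.update p.2.2.1 (K j p.2.2.2 p.2.2.1) (V j p.2.2.2 p.2.2.1),
       max p.2.2.2 (max (K j p.2.2.2 p.2.2.1) (B (N j p.2.2.2 p.2.2.1)))) with hstepdef
    set σ : ℕ → ℕ × ℕ × (ℕ → X) × ℕ :=
      fun j => Nat.rec ((0:ℕ), (0:ℕ), (fun _ => (0:X)), (0:ℕ)) step j with hσdef
    have hσs : ∀ j, σ (j + 1) = step j (σ j) := fun j => rfl
    set kk : ℕ → ℕ := fun j => (σ (j+1)).1 with hkkdef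
    set nn : ℕ → ℕ := fun j => (σ (j+1)).2.1 with hnndef
    set vv : ℕ → X := fun j => V j (σ j).2.2.2 (σ j).2.2.1 with hvvdef
    have hkkK : ∀ j, kk j = K j (σ j).2.2.2 (σ j).2.2.1 := fun j => rfl
    have hnnN : ∀ j, nn j = N j (σ j).2.2.2 (σ j).2.2.1 := fun j => rfl
    have hχs : ∀ j, (σ (j+1)).2.2.1 = Function.update (σ j).2.2.1 (kk j) (vv j) := fun j => rfl
    have hMs : ∀ j, (σ (j+1)).2.2.2 = max (σ j).2.2.2 (max (kk j) (B (nn j))) := fun j => rfl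
    have hkT2 : ∀ j, kk j ∈ T := fun j => hKT j _ _
    have hkM2 : ∀ j, (σ j).2.2.2 < kk j := fun j => hKM j _ _
    have hne2 : ∀ j, A (nn j) (kk j) ≠ 0 := fun j => hKne j _ _
    have hbig2 : ∀ j : ℕ, (j : ℝ) + 1 + ‖∑ i ∈ Finset.range (kk j), A (nn j) i ((σ j).2.2.1 i)‖
        ≤ ‖A (nn j) (kk j) (vv j)‖ := fun j => hKbig j _ _
    -- monotonicity facts
    have hMmono : Monotone (fun j => (σ j).2.2.2) := by
      apply monotone_nat_of_le_succ
      intro j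
      rw [hMs j]
      exact le_max_left _ _
    have hkleM : ∀ j, kk j ≤ (σ (j+1)).2.2.2 := by
      intro j
      rw [hMs j]
      exact le_trans (le_max_left _ _) (le_max_right _ _)
    have hBleM : ∀ j, B (nn j) ≤ (σ (j+1)).2.2.2 := by
      intro j
      rw [hMs j]
      exact le_trans (le_max_right _ _) (le_max_right _ _)
    have hkmono : StrictMono kk := by
      apply strictMono_nat_of_lt_succ
      intro j
      exact lt_of_le_of_lt (hkleM j) (hkM2 (j+1))
    -- later columns vanish in earlier chosen rows
    have hvanish : ∀ j l, j < l → A (nn j) (kk l) = 0 := by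
      intro j l hjl
      by_contra h
      have h1 : kk l ≤ B (nn j) := hB (nn j) (kk l) (hkT2 l) h
      have h2 : B (nn j) ≤ (σ (j+1)).2.2.2 := hBleM j
      have h3 : (σ (j+1)).2.2.2 ≤ (σ l).2.2.2 := hMmono hjl
      have h4 := hkM2 l
      omega
    -- characterization of the partial sequences
    have hcc0 : ∀ j m, (∀ i, i ≤ j → kk i ≠ m) → (σ (j+1)).2.2.1 m = 0 := by
      intro j
      induction j with
      | zero =>
        intro m hm
        rw [hχs 0, Function.update_of_ne (Ne.symm (hm 0 le_rfl))]
        rfl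
      | succ j ih =>
        intro m hm
        rw [hχs (j+1), Function.update_of_ne (Ne.symm (hm (j+1) le_rfl))]
        exact ih m (fun i hi => hm i (Nat.le_succ_of_le hi))
    have hccv : ∀ j i, i ≤ j → (σ (j+1)).2.2.1 (kk i) = vv i := by
      intro j
      induction j with
      | zero =>
        intro i hi
        interval_cases i
        rw [hχs 0, Function.update_self]
      | succ j ih =>
        intro i hi
        rcases Nat.lt_or_ge i (j+1) with h | h
        · rw [hχs (j+1), Function.update_of_ne (fun hc => absurd (hkmono.injective hc) (by omega))]
          exact ih i (by omega)
        · have : i = j + 1 := by omega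
          rw [this, hχs (j+1), Function.update_self]
    -- the diagonal sequence
    set x : ℕ → X := fun m => (σ (m+1)).2.2.1 m with hxdef
    have hx0 : ∀ m, (∀ i, kk i ≠ m) → x m = 0 := by
      intro m hm
      exact hcc0 m m (fun i _ => hm i)
    have hxk : ∀ i, x (kk i) = vv i := by
      intro i
      exact hccv (kk i) i (hkmono.le_apply)
    -- agreement of partial sequences with x below the new column
    have hagree : ∀ j m, m < kk j → (σ j).2.2.1 m = x m := by
      intro j m hmk
      by_cases hm : ∃ i, kk i = m
      · obtain ⟨i, rfl⟩ := hm
        have hij : i < j := by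
          by_contra hc
          push_neg at hc
          exact absurd (hkmono.lt_iff_lt.mp hmk) (by omega)
        obtain ⟨j', rfl⟩ : ∃ j', j = j' + 1 := ⟨j - 1, by omega⟩
        rw [hccv j' i (by omega), hxk i]
      · push_neg at hm
        rw [hx0 m hm]
        cases j with
        | zero => rfl
        | succ j' => exact hcc0 j' m (fun i _ => hm i)
    -- the support of x lies in T
    have hsupp : {m | x m ≠ 0} ∈ I := by
      refine hI_sub T _ hTI ?_
      intro m hm
      simp only [Set.mem_setOf_eq] at hm
      by_contra hmT
      refine hm (hx0 m fun i hc => ?_)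
      exact hmT (hc ▸ hkT2 i)
    obtain ⟨y, hy, r, hr⟩ := hA x hsupp
    -- key estimate
    have key : ∀ j : ℕ, (j : ℝ) + 1 ≤ ‖y (nn j)‖ := by
      intro j
      set z : Y := ∑ i ∈ Finset.range (kk j + 1), A (nn j) i (x i) with hzdef
      have hconst : ∀ m, kk j + 1 ≤ m → ∑ i ∈ Finset.range m, A (nn j) i (x i) = z := by
        intro m hm
        rw [hzdef]
        symm
        apply Finset.sum_subset (Finset.range_subset_range.mpr hm)
        intro i _ hi
        simp only [Finset.mem_range] at hi
        have hik : kk j < i := by omega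
        by_cases hex : ∃ l, kk l = i
        · obtain ⟨l, rfl⟩ := hex
          have : j < l := hkmono.lt_iff_lt.mp hik
          rw [hvanish j l this]
          rfl
        · push_neg at hex
          rw [hx0 i hex, map_zero]
      have htend : Tendsto (fun m => ∑ i ∈ Finset.range m, A (nn j) i (x i)) atTop (nhds z) :=
        tendsto_atTop_of_eventually_const hconst
      have hyz : y (nn j) = z := tendsto_nhds_unique (hy (nn j)) htend
      have hsum : z = (∑ i ∈ Finset.range (kk j), A (nn j) i (x i)) + A (nn j) (kk j) (vv j) := by
        rw [hzdef, Finset.sum_range_succ, hxk j]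
      have hag : ∑ i ∈ Finset.range (kk j), A (nn j) i ((σ j).2.2.1 i)
          = ∑ i ∈ Finset.range (kk j), A (nn j) i (x i) := by
        apply Finset.sum_congr rfl
        intro i hi
        rw [hagree j i (Finset.mem_range.mp hi)]
      have hbig3 := hbig2 j
      rw [hag] at hbig3
      set D : ℝ := ‖∑ i ∈ Finset.range (kk j), A (nn j) i (x i)‖ with hDdef
      have htri : ‖A (nn j) (kk j) (vv j)‖ ≤ ‖z‖ + D := by
        have : A (nn j) (kk j) (vv j) = z - ∑ i ∈ Finset.range (kk j), A (nn j) i (x i) := by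
          rw [hsum]; abel
        rw [this]
        exact le_trans (norm_sub_le _ _) (by rw [hDdef])
      rw [hyz]
      linarith
    obtain ⟨j, hj⟩ := exists_nat_gt r
    have h1 := key j
    have h2 := hr (nn j)
    linarith
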